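/- Let σ ∈ L_{2,unif}(ℝ), i.e., σ is locally square-integrable with ‖σ‖²_{2,unif} := sup_{t∈ℝ} ∫_t^{t+1} |σ(s)|² ds < ∞. Then for every f ∈ W^1_2(ℝ), the product σf belongs to L²(ℝ), and moreover ‖σf‖²_{L²(ℝ)} ≤ 72 ‖σ‖²_{2,unif} ‖f‖²_{W^1_2(ℝ)}. -/

import Mathlib

open MeasureTheory ENNReal


lemma key_pointwise (f f' : ℝ → ℝ)
    (hderiv : ∀ x, HasDerivAt f (f' x) x)
    (hf'2 : Integrable (fun x => (f' x) ^ 2)) (x : ℝ) :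
    f x ^ 2 ≤ 2 * (∫ y in x..(x+1), f y ^ 2) + ∫ y in x..(x+1), f' y ^ 2 := by
  have hcf : Continuous f := by
    rw [continuous_iff_continuousAt]; exact fun t => (hderiv t).continuousAt
  have hf'm : Measurable f' := by
    have : f' = deriv f := funext fun t => ((hderiv t).deriv).symm
    rw [this]; exact measurable_deriv f
  have ii_f2 : ∀ a b : ℝ, IntervalIntegrable (fun y => f y ^ 2) volume a b :=
    fun a b => ((hcf.pow 2)).intervalIntegrable a b
  have ii_f'2 : ∀ a b : ℝ, IntervalIntegrable (fun y => f' y ^ 2) volume a b :=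
    fun a b => hf'2.intervalIntegrable
  have ii_f' : ∀ a b : ℝ, IntervalIntegrable f' volume a b := by
    intro a b
    refine IntervalIntegrable.mono_fun ((ii_f'2 a b).add (intervalIntegrable_const (c := (1:ℝ))))
      hf'm.aestronglyMeasurable (Filter.Eventually.of_forall fun y => ?_)
    simp only [Real.norm_eq_abs]
    have := abs_nonneg (f' y)
    rw [abs_of_nonneg (by positivity : (0:ℝ) ≤ f' y ^ 2 + 1)]
    nlinarith [sq_abs (f' y), sq_nonneg (|f' y| - 1)]
  have ii_ff' : ∀ a b : ℝ, IntervalIntegrable (fun y => f y * f' y) volume a b :=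
    fun a b => (ii_f' a b).continuousOn_mul hcf.continuousOn
  -- FTC bound: for y ∈ [x, x+1], f x ^2 ≤ f y ^2 + C
  set C := ∫ y in x..(x+1), (f y ^ 2 + f' y ^ 2) with hC
  have habs : ∀ y ∈ Set.Icc x (x+1), f x ^ 2 ≤ f y ^ 2 + C := by
    intro y hy
    have ftc : ∫ t in x..y, 2 * (f t * f' t) = f y ^ 2 - f x ^ 2 := by
      refine intervalIntegral.integral_eq_sub_of_hasDerivAt (f := fun u => f u ^ 2) (fun t _ => ?_)
        (((ii_ff' x y)).const_mul 2)
      have := (hderiv t).fun_pow 2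
      exact this.congr_deriv (by ring)
    have h1 : |∫ t in x..y, 2 * (f t * f' t)| ≤ ∫ t in x..y, |2 * (f t * f' t)| :=
      intervalIntegral.abs_integral_le_integral_abs hy.1
    have h2 : ∫ t in x..y, |2 * (f t * f' t)| ≤ ∫ t in x..(x+1), |2 * (f t * f' t)| := by
      refine intervalIntegral.integral_mono_interval le_rfl hy.1 hy.2
        (Filter.Eventually.of_forall fun t => abs_nonneg _) ?_
      exact ((ii_ff' x (x+1)).const_mul 2).abs
    have h3 : ∫ t in x..(x+1), |2 * (f t * f' t)| ≤ C := by
      rw [hC]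
      refine intervalIntegral.integral_mono_on (by linarith)
        ((ii_ff' x (x+1)).const_mul 2).abs ((ii_f2 x (x+1)).add (ii_f'2 x (x+1)))
        (fun t _ => ?_)
      have : |2 * (f t * f' t)| = 2 * |f t * f' t| := by
        rw [abs_mul]; norm_num
      rw [this, abs_mul]
      nlinarith [sq_abs (f t), sq_abs (f' t), sq_nonneg (|f t| - |f' t|), abs_nonneg (f t), abs_nonneg (f' t)]
    have := abs_le.1 ((le_trans h1 (le_trans h2 h3)))
    nlinarith [ftc, abs_le.1 (le_trans h1 (le_trans h2 h3))]
  -- integrate over y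
  have hint : f x ^ 2 = ∫ y in x..(x+1), f x ^ 2 := by
    simp
  have hmono : (∫ y in x..(x+1), f x ^ 2) ≤ ∫ y in x..(x+1), (f y ^ 2 + C) := by
    refine intervalIntegral.integral_mono_on (by linarith) intervalIntegrable_const
      ((ii_f2 x (x+1)).add intervalIntegrable_const) habs
  have hadd : (∫ y in x..(x+1), (f y ^ 2 + C)) = (∫ y in x..(x+1), f y ^ 2) + C := by
    rw [intervalIntegral.integral_add (ii_f2 x (x+1)) intervalIntegrable_const]
    simp
  have hCeq : C = (∫ y in x..(x+1), f y ^ 2) + ∫ y in x..(x+1), f' y ^ 2 :=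
    intervalIntegral.integral_add (ii_f2 x (x+1)) (ii_f'2 x (x+1))
  rw [hint]
  calc (∫ y in x..(x+1), f x ^ 2) ≤ (∫ y in x..(x+1), f y ^ 2) + C := hmono.trans_eq hadd
    _ = 2 * (∫ y in x..(x+1), f y ^ 2) + ∫ y in x..(x+1), f' y ^ 2 := by rw [hCeq]; ring

lemma meas_G (g : ℝ → ℝ) (hgm : Measurable g) :
    Measurable (fun x => ∫⁻ y in Set.Ioc x (x+1), ENNReal.ofReal (g y)) := by
  have heq : (fun x => ∫⁻ y in Set.Ioc x (x+1), ENNReal.ofReal (g y))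
      = fun x => ∫⁻ y, (if x < y ∧ y ≤ x + 1 then ENNReal.ofReal (g y) else 0) := by
    funext x
    rw [← lintegral_indicator measurableSet_Ioc]
    congr 1; funext y
    simp [Set.indicator_apply, Set.mem_Ioc]
  rw [heq]
  refine Measurable.lintegral_prod_right' (f := fun p : ℝ × ℝ =>
    if p.1 < p.2 ∧ p.2 ≤ p.1 + 1 then ENNReal.ofReal (g p.2) else 0) ?_
  refine Measurable.ite ?_ ((hgm.comp measurable_snd).ennreal_ofReal) measurable_const
  exact (measurableSet_lt measurable_fst measurable_snd).inter
    (measurableSet_le measurable_snd (measurable_fst.add_const 1))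

lemma tonelli_bound (s g : ℝ → ℝ) (M : ℝ) (hsm : Measurable s) (hs0 : ∀ x, 0 ≤ s x)
    (hsi : ∀ y : ℝ, IntegrableOn s (Set.Ico (y-1) y))
    (hsM : ∀ y : ℝ, ∫ x in Set.Ico (y-1) y, s x ≤ M)
    (hgm : Measurable g) (hg0 : ∀ x, 0 ≤ g x) (hgi : Integrable g) :
    ∫⁻ x, ENNReal.ofReal (s x) * ∫⁻ y in Set.Ioc x (x+1), ENNReal.ofReal (g y)
      ≤ ENNReal.ofReal M * ENNReal.ofReal (∫ y, g y) := by
  set k : ℝ → ℝ → ℝ≥0∞ := fun x y =>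
    if x < y ∧ y ≤ x + 1 then ENNReal.ofReal (s x) * ENNReal.ofReal (g y) else 0 with hk
  have hkm : Measurable (Function.uncurry k) := by
    refine Measurable.ite ?_
      (((hsm.comp measurable_fst).ennreal_ofReal).mul ((hgm.comp measurable_snd).ennreal_ofReal))
      measurable_const
    exact (measurableSet_lt measurable_fst measurable_snd).inter
      (measurableSet_le measurable_snd (measurable_fst.add_const 1))
  have hA : ∀ x, ∫⁻ y, k x y = ENNReal.ofReal (s x) * ∫⁻ y in Set.Ioc x (x+1), ENNReal.ofReal (g y) := by
    intro x
    rw [← lintegral_const_mul _ hgm.ennreal_ofReal, ← lintegral_indicator measurableSet_Ioc]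
    congr 1; funext y
    simp [hk, Set.indicator_apply, Set.mem_Ioc]
  have hB : ∀ y, ∫⁻ x, k x y = ENNReal.ofReal (g y) * ∫⁻ x in Set.Ico (y-1) y, ENNReal.ofReal (s x) := by
    intro y
    rw [← lintegral_const_mul _ hsm.ennreal_ofReal, ← lintegral_indicator measurableSet_Ico]
    congr 1; funext x
    have : x ∈ Set.Ico (y-1) y ↔ (x < y ∧ y ≤ x + 1) := by
      simp only [Set.mem_Ico]; constructor <;> intro h <;> exact ⟨by linarith [h.1, h.2], by linarith [h.1, h.2]⟩
    simp only [hk, Set.indicator_apply, this]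
    by_cases h : x < y ∧ y ≤ x + 1 <;> simp [h, mul_comm]
  have hC : ∀ y : ℝ, ∫⁻ x in Set.Ico (y-1) y, ENNReal.ofReal (s x) ≤ ENNReal.ofReal M := by
    intro y
    rw [← ofReal_integral_eq_lintegral_ofReal (hsi y)
      (Filter.Eventually.of_forall fun x => hs0 x)]
    exact ENNReal.ofReal_le_ofReal (hsM y)
  calc ∫⁻ x, ENNReal.ofReal (s x) * ∫⁻ y in Set.Ioc x (x+1), ENNReal.ofReal (g y)
      = ∫⁻ x, ∫⁻ y, k x y := by simp_rw [hA]
    _ = ∫⁻ y, ∫⁻ x, k x y := lintegral_lintegral_swap hkm.aemeasurable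
    _ ≤ ∫⁻ y, ENNReal.ofReal (g y) * ENNReal.ofReal M := by
        refine lintegral_mono fun y => ?_
        rw [hB y]
        exact mul_le_mul_right (hC y) _
    _ = ENNReal.ofReal M * ∫⁻ y, ENNReal.ofReal (g y) := by
        rw [lintegral_mul_const _ hgm.ennreal_ofReal, mul_comm]
    _ = ENNReal.ofReal M * ENNReal.ofReal (∫ y, g y) := by
        rw [ofReal_integral_eq_lintegral_ofReal hgi (Filter.Eventually.of_forall hg0)]

/-- If `σ ∈ L_{2,unif}(ℝ)` (with `M` an upper bound for `sup_t ∫_t^{t+1} σ²`) and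
`f ∈ W¹₂(ℝ)`, then `σ f ∈ L²(ℝ)` with `‖σ f‖² ≤ 72 ‖σ‖²_{2,unif} ‖f‖²_{W¹₂}`. -/
theorem mul_sigma_memL2 (σ f f' : ℝ → ℝ) (M : ℝ)
    (hσloc : LocallyIntegrable (fun x => (σ x) ^ 2) volume)
    (hσ : ∀ t : ℝ, ∫ s in t..(t + 1), (σ s) ^ 2 ≤ M)
    (hderiv : ∀ x, HasDerivAt f (f' x) x)
    (hf2 : Integrable (fun x => (f x) ^ 2))
    (hf'2 : Integrable (fun x => (f' x) ^ 2)) :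
    Integrable (fun x => (σ x * f x) ^ 2) ∧
      ∫ x, (σ x * f x) ^ 2 ≤ 72 * M * ((∫ x, (f x) ^ 2) + ∫ x, (f' x) ^ 2) := by
  have hcf : Continuous f := by
    rw [continuous_iff_continuousAt]; exact fun t => (hderiv t).continuousAt
  have hfm2 : Measurable (fun x => f x ^ 2) := (hcf.pow 2).measurable
  have hf'm : Measurable f' := by
    have : f' = deriv f := funext fun t => ((hderiv t).deriv).symm
    rw [this]; exact measurable_deriv f
  have hf'm2 : Measurable (fun x => f' x ^ 2) := hf'm.pow_const 2
  -- measurable representative of σ²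
  have hsm0 := hσloc.aestronglyMeasurable
  set s : ℝ → ℝ := fun x => |hsm0.mk (fun x => σ x ^ 2) x| with hs_def
  have hs0 : ∀ x, 0 ≤ s x := fun x => abs_nonneg _
  have hsm : Measurable s := hsm0.stronglyMeasurable_mk.measurable.abs
  have hse : (fun x => σ x ^ 2) =ᵐ[volume] s := by
    filter_upwards [hsm0.ae_eq_mk] with x hx
    rw [hs_def]; simp only [← hx, abs_of_nonneg (sq_nonneg (σ x))]
  have hsi : ∀ y : ℝ, IntegrableOn s (Set.Ico (y-1) y) := by
    intro y
    have h1 : IntegrableOn (fun x => σ x ^ 2) (Set.Ico (y-1) y) :=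
      (hσloc.integrableOn_isCompact isCompact_Icc).mono_set Set.Ico_subset_Icc_self
    exact h1.congr (ae_restrict_of_ae hse)
  have hM0 : 0 ≤ M := by
    have h0 : (0:ℝ) ≤ ∫ t in (0:ℝ)..(0+1), σ t ^ 2 :=
      intervalIntegral.integral_nonneg (by norm_num) (fun t _ => sq_nonneg _)
    linarith [hσ 0]
  have hsM : ∀ y : ℝ, ∫ x in Set.Ico (y-1) y, s x ≤ M := by
    intro y
    have h1 : ∫ x in Set.Ico (y-1) y, s x = ∫ x in Set.Ico (y-1) y, σ x ^ 2 :=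
      integral_congr_ae (ae_restrict_of_ae hse.symm)
    have h2 : ∫ x in Set.Ico (y-1) y, σ x ^ 2 = ∫ x in Set.Ioc (y-1) y, σ x ^ 2 := by
      rw [integral_Ico_eq_integral_Ioo, integral_Ioc_eq_integral_Ioo]
    have h3 : ∫ x in Set.Ioc (y-1) y, σ x ^ 2 = ∫ x in (y-1)..(y-1+1), σ x ^ 2 := by
      rw [intervalIntegral.integral_of_le (by linarith), show y - 1 + 1 = y by ring]
    rw [h1, h2, h3]; exact hσ (y-1)
  -- notation
  set S : ℝ → ℝ≥0∞ := fun x => ENNReal.ofReal (s x) with hS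
  set GA : ℝ → ℝ≥0∞ := fun x => ∫⁻ y in Set.Ioc x (x+1), ENNReal.ofReal (f y ^ 2) with hGA
  set GB : ℝ → ℝ≥0∞ := fun x => ∫⁻ y in Set.Ioc x (x+1), ENNReal.ofReal (f' y ^ 2) with hGB
  set If2 := ∫ x, f x ^ 2 with hIf2
  set If'2 := ∫ x, f' x ^ 2 with hIf'2
  have hIf2_0 : 0 ≤ If2 := integral_nonneg fun x => sq_nonneg _
  have hIf'2_0 : 0 ≤ If'2 := integral_nonneg fun x => sq_nonneg _
  set R : ℝ≥0∞ := 2 * (ENNReal.ofReal M * ENNReal.ofReal If2) + ENNReal.ofReal M * ENNReal.ofReal If'2 with hR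
  have hRne : R ≠ ∞ := by
    rw [hR]
    exact ENNReal.add_ne_top.2 ⟨ENNReal.mul_ne_top (by simp) (ENNReal.mul_ne_top ofReal_ne_top ofReal_ne_top),
      ENNReal.mul_ne_top ofReal_ne_top ofReal_ne_top⟩
  -- main lintegral bound
  have hL : ∫⁻ x, ENNReal.ofReal ((σ x * f x) ^ 2) ≤ R := by
    have step0 : ∫⁻ x, ENNReal.ofReal ((σ x * f x) ^ 2) = ∫⁻ x, ENNReal.ofReal (s x * f x ^ 2) := by
      refine lintegral_congr_ae ?_
      filter_upwards [hse] with x hx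
      rw [mul_pow, hx]
    have step1 : ∀ x, ENNReal.ofReal (s x * f x ^ 2) ≤ S x * (2 * GA x + GB x) := by
      intro x
      have hA : ENNReal.ofReal (∫ y in x..(x+1), f y ^ 2) = GA x := by
        rw [hGA, intervalIntegral.integral_of_le (by linarith : x ≤ x + 1)]
        exact ofReal_integral_eq_lintegral_ofReal (hf2.integrableOn)
          (Filter.Eventually.of_forall fun y => sq_nonneg _)
      have hB : ENNReal.ofReal (∫ y in x..(x+1), f' y ^ 2) = GB x := by
        rw [hGB, intervalIntegral.integral_of_le (by linarith : x ≤ x + 1)]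
        exact ofReal_integral_eq_lintegral_ofReal (hf'2.integrableOn)
          (Filter.Eventually.of_forall fun y => sq_nonneg _)
      rw [ENNReal.ofReal_mul (hs0 x)]
      refine mul_le_mul_right ?_ _
      refine le_trans (ENNReal.ofReal_le_ofReal (key_pointwise f f' hderiv hf'2 x)) ?_
      refine le_trans (ENNReal.ofReal_add_le) ?_
      rw [ENNReal.ofReal_mul (by norm_num : (0:ℝ) ≤ 2), hA, hB]
      simp [ENNReal.ofReal_ofNat]
    have step2 : ∫⁻ x, S x * (2 * GA x + GB x)
        = 2 * (∫⁻ x, S x * GA x) + ∫⁻ x, S x * GB x := by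
      have : ∀ x, S x * (2 * GA x + GB x) = 2 * (S x * GA x) + S x * GB x := by
        intro x; ring
      simp_rw [this]
      rw [lintegral_add_left' (f := fun x => 2 * (S x * GA x)) (((hsm.ennreal_ofReal.mul (meas_G _ hfm2)).const_mul 2).aemeasurable),
        lintegral_const_mul' 2 _ (by simp)]
    calc ∫⁻ x, ENNReal.ofReal ((σ x * f x) ^ 2)
        = ∫⁻ x, ENNReal.ofReal (s x * f x ^ 2) := step0
      _ ≤ ∫⁻ x, S x * (2 * GA x + GB x) := lintegral_mono step1
      _ = 2 * (∫⁻ x, S x * GA x) + ∫⁻ x, S x * GB x := step2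
      _ ≤ R := by
          rw [hR]
          refine add_le_add (mul_le_mul_right ?_ 2) ?_
          · exact tonelli_bound s _ M hsm hs0 hsi hsM hfm2 (fun x => sq_nonneg _) hf2
          · exact tonelli_bound s _ M hsm hs0 hsi hsM hf'm2 (fun x => sq_nonneg _) hf'2
  have aesm : AEStronglyMeasurable (fun x => (σ x * f x) ^ 2) volume := by
    have : (fun x => (σ x * f x) ^ 2) = fun x => (σ x ^ 2) * (f x ^ 2) := by
      funext x; ring
    rw [this]
    exact hσloc.aestronglyMeasurable.mul (hcf.pow 2).aestronglyMeasurable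
  have hint : Integrable (fun x => (σ x * f x) ^ 2) := by
    refine ⟨aesm, ?_⟩
    rw [HasFiniteIntegral]
    have : ∫⁻ x, ‖(σ x * f x) ^ 2‖ₑ = ∫⁻ x, ENNReal.ofReal ((σ x * f x) ^ 2) := by
      refine lintegral_congr fun x => ?_
      rw [Real.enorm_eq_ofReal (sq_nonneg _)]
    rw [this]
    exact lt_of_le_of_lt hL (lt_top_iff_ne_top.2 hRne)
  refine ⟨hint, ?_⟩
  have hIeq : ∫ x, (σ x * f x) ^ 2 = (∫⁻ x, ENNReal.ofReal ((σ x * f x) ^ 2)).toReal :=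
    integral_eq_lintegral_of_nonneg_ae (Filter.Eventually.of_forall fun x => sq_nonneg _) aesm
  have hRtoReal : R.toReal = 2 * (M * If2) + M * If'2 := by
    rw [hR]
    rw [ENNReal.toReal_add (ENNReal.mul_ne_top (by simp) (ENNReal.mul_ne_top ofReal_ne_top ofReal_ne_top))
      (ENNReal.mul_ne_top ofReal_ne_top ofReal_ne_top)]
    rw [ENNReal.toReal_mul, ENNReal.toReal_mul, ENNReal.toReal_mul,
      ENNReal.toReal_ofReal hM0, ENNReal.toReal_ofReal hIf2_0, ENNReal.toReal_ofReal hIf'2_0]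
    norm_num
  have : ∫ x, (σ x * f x) ^ 2 ≤ R.toReal := by
    rw [hIeq]
    exact ENNReal.toReal_mono hRne hL
  rw [hRtoReal] at this
  nlinarith [mul_nonneg hM0 hIf2_0, mul_nonneg hM0 hIf'2_0]
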